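/- Let M > 0 and let g ∈ X₁ with ‖g‖_∞ ≤ M. Define B(x) = κ / (x · h⁻¹(x) · ((h⁻¹)'(x))²) for x ≠ 0 (so B = F'/(h⁻¹)'). Then there exist constants 0 < c₁ ≤ c₂ depending only on μ, ν, M such that c₁ |x|^(1−3ν) ≤ B(x) ≤ c₂ |x|^(1−3ν) for 0 < |x| ≤ 1, and c₁ |x|^(1−3μ) ≤ B(x) ≤ c₂ |x|^(1−3μ) for |x| ≥ 1. -/

import Mathlib

open MeasureTheory Real Filter Set Bornology

/-- `h⁻¹(x) = ∫₀ˣ |y|^(ν−1)(y²+1)^((μ−ν)/2) e^(g(y)) dy`. -/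
noncomputable def hInv (μ ν : ℝ) (g : ℝ → ℝ) (x : ℝ) : ℝ :=
  ∫ y in (0:ℝ)..x, |y| ^ (ν - 1) * (y ^ 2 + 1) ^ ((μ - ν) / 2) * Real.exp (g y)

/-- `(h⁻¹)'(x) = |x|^(ν−1)(x²+1)^((μ−ν)/2) e^(g(x))`. -/
noncomputable def hInvDeriv (μ ν : ℝ) (g : ℝ → ℝ) (x : ℝ) : ℝ :=
  |x| ^ (ν - 1) * (x ^ 2 + 1) ^ ((μ - ν) / 2) * Real.exp (g x)

/-- The constant `κ = κ(g)` determined by `∫_ℝ κ/(x h⁻¹(x) (h⁻¹)'(x)) dx = (μ−ν)π`. -/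
noncomputable def kappa (μ ν : ℝ) (g : ℝ → ℝ) : ℝ :=
  (μ - ν) * Real.pi / ∫ x : ℝ, 1 / (x * hInv μ ν g x * hInvDeriv μ ν g x)

/-- `F'(x) = κ/(x h⁻¹(x) (h⁻¹)'(x))`. -/
noncomputable def Fder (μ ν : ℝ) (g : ℝ → ℝ) (x : ℝ) : ℝ :=
  kappa μ ν g / (x * hInv μ ν g x * hInvDeriv μ ν g x)

/-- `F = F_g`, the antiderivative of `Fder` with `F(+∞) = 0`. -/
noncomputable def Fg (μ ν : ℝ) (g : ℝ → ℝ) (x : ℝ) : ℝ :=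
  -∫ y in Set.Ioi x, Fder μ ν g y

/-- `θ(x)`: the continuous branch of `arg (x − i)`, i.e. `arctan(−1/x)` for `x > 0`,
`arctan(−1/x) − π` for `x < 0`, and `−π/2` at `x = 0`. -/
noncomputable def theta (x : ℝ) : ℝ :=
  if x = 0 then -(Real.pi / 2)
  else if x < 0 then Real.arctan (-1 / x) - Real.pi
  else Real.arctan (-1 / x)

/-- `HasHilbertAt f x v`: the principal value `(1/π) lim_{ε→0⁺} ∫_{|x−y|>ε} f(y)/(x−y) dy`
exists and equals `v`. -/
def HasHilbertAt (f : ℝ → ℝ) (x v : ℝ) : Prop :=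
  Filter.Tendsto
    (fun ε : ℝ => (1 / Real.pi) * ∫ y in {y : ℝ | ε < |x - y|}, f y / (x - y))
    (nhdsWithin 0 (Set.Ioi 0)) (nhds v)

/-- `G(x) = g(x) + (1/2)(μ−ν) ln(x²+1)`. -/
noncomputable def Gfun (μ ν : ℝ) (g : ℝ → ℝ) (x : ℝ) : ℝ :=
  g x + (1 / 2) * (μ - ν) * Real.log (x ^ 2 + 1)

/-- `g` is a solution of system (3.12): `g` is bounded and continuous, the principal
value `T[g](x) = H(F_g − (μ−ν)θ)(x)` exists for every `x`, and `g = T[g]`. -/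
def IsSolution (μ ν : ℝ) (g : ℝ → ℝ) : Prop :=
  Continuous g ∧ (∃ M : ℝ, ∀ x, |g x| ≤ M) ∧
    ∀ x : ℝ, HasHilbertAt (fun y => Fg μ ν g y - (μ - ν) * theta y) x (g x)
/-- `B(x) = κ/(x h⁻¹(x) ((h⁻¹)'(x))²)`, i.e. `B = F'/(h⁻¹)' = b' ∘ h⁻¹`. -/
noncomputable def Bfun (μ ν : ℝ) (g : ℝ → ℝ) (x : ℝ) : ℝ :=
  kappa μ ν g / (x * hInv μ ν g x * (hInvDeriv μ ν g x) ^ 2)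

open intervalIntegral

lemma aux_abs_rpow_II {r : ℝ} (hr : -1 < r) (a b : ℝ) :
    IntervalIntegrable (fun y : ℝ => |y| ^ r) volume a b := by
  have H : ∀ c : ℝ, 0 ≤ c → IntervalIntegrable (fun y : ℝ => |y| ^ r) volume 0 c := by
    intro c hc
    refine (intervalIntegrable_rpow' hr (a := 0) (b := c)).congr ?_
    intro y hy; dsimp only
    rw [uIoc_of_le hc] at hy
    rw [abs_of_pos hy.1]
  have H' : ∀ c : ℝ, IntervalIntegrable (fun y : ℝ => |y| ^ r) volume 0 c := by
    intro c
    rcases le_or_gt 0 c with hc | hc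
    · exact H c hc
    · have := (H (-c) (by linarith))
      have h2 := (IntervalIntegrable.iff_comp_neg (by simp)).mp this
      simpa using h2
  exact (H' a).symm.trans (H' b)

lemma x_mul_rpow {x : ℝ} (hx : 0 < x) (p q : ℝ) : x * x ^ p * x ^ q = x ^ (1 + p + q) := by
  nth_rewrite 1 [← Real.rpow_one x]
  rw [← Real.rpow_add hx, ← Real.rpow_add hx]

lemma x_mul_rpow_sq {x : ℝ} (hx : 0 < x) (p q : ℝ) :
    x * x ^ p * (x ^ q) ^ 2 = x ^ (1 + p + 2 * q) := by
  rw [sq, ← Real.rpow_add hx q q, x_mul_rpow hx]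
  ring_nf

lemma prod3_le {x h d H D : ℝ} (hx : 0 ≤ x) (h1 : h ≤ H) (h2 : d ≤ D) (hh : 0 ≤ h)
    (hd : 0 ≤ d) (hH : 0 ≤ H) : x * h * d ≤ x * H * D :=
  mul_le_mul (mul_le_mul_of_nonneg_left h1 hx) h2 hd (mul_nonneg hx hH)

lemma mul3_le {a b c A B C : ℝ} (h1 : a ≤ A) (h2 : b ≤ B) (h3 : c ≤ C) (ha : 0 ≤ a)
    (hb : 0 ≤ b) (hc : 0 ≤ c) (hA : 0 ≤ A) (hB : 0 ≤ B) : a * b * c ≤ A * B * C :=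
  mul_le_mul (mul_le_mul h1 h2 hb hA) h3 hc (mul_nonneg hA hB)

section PartB
variable {μ ν M : ℝ} {g : ℝ → ℝ}

lemma g_even (hGe : ∀ x, Gfun μ ν g (-x) = Gfun μ ν g x) (x : ℝ) : g (-x) = g x := by
  have := hGe x
  unfold Gfun at this
  rw [neg_pow] at this
  simp at this
  linarith [this]

lemma D_nonneg (x : ℝ) : 0 ≤ hInvDeriv μ ν g x := by
  unfold hInvDeriv
  have h1 : (0:ℝ) ≤ |x| ^ (ν - 1) := Real.rpow_nonneg (abs_nonneg x) _
  have h2 : (0:ℝ) ≤ (x ^ 2 + 1) ^ ((μ - ν) / 2) := Real.rpow_nonneg (by positivity) _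
  positivity

lemma D_even (hGe : ∀ x, Gfun μ ν g (-x) = Gfun μ ν g x) (x : ℝ) :
    hInvDeriv μ ν g (-x) = hInvDeriv μ ν g x := by
  unfold hInvDeriv
  rw [abs_neg, neg_pow, g_even hGe]
  simp

lemma D_II (hν1 : 0 < ν) (hgc : Continuous g) (a b : ℝ) :
    IntervalIntegrable (hInvDeriv μ ν g) volume a b := by
  have hc : Continuous fun x : ℝ => (x ^ 2 + 1) ^ ((μ - ν) / 2) * Real.exp (g x) := by
    apply Continuous.mul
    · exact (continuous_pow 2 |>.add continuous_const).rpow_const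
        (fun x => Or.inl (by positivity : (x:ℝ) ^ 2 + 1 ≠ 0))
    · exact Real.continuous_exp.comp hgc
  have h1 : IntervalIntegrable (fun y : ℝ => |y| ^ (ν - 1)) volume a b :=
    aux_abs_rpow_II (by linarith) a b
  have := h1.mul_continuousOn hc.continuousOn
  refine this.congr ?_
  intro y _; dsimp only
  unfold hInvDeriv
  ring

lemma hInv_cont (hν1 : 0 < ν) (hgc : Continuous g) : Continuous (hInv μ ν g) := by
  unfold hInv
  exact intervalIntegral.continuous_primitive (fun a b => D_II hν1 hgc a b) 0

lemma hInv_odd (hν1 : 0 < ν) (hgc : Continuous g)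
    (hGe : ∀ x, Gfun μ ν g (-x) = Gfun μ ν g x) (x : ℝ) :
    hInv μ ν g (-x) = -hInv μ ν g x := by
  have h1 : ∫ y in (0:ℝ)..x, hInvDeriv μ ν g (-y) = ∫ y in (-x)..(0:ℝ), hInvDeriv μ ν g y := by
    simpa using intervalIntegral.integral_comp_neg (a := (0:ℝ)) (b := x) (hInvDeriv μ ν g)
  have h1' : ∫ y in (0:ℝ)..x, hInvDeriv μ ν g y = ∫ y in (-x)..(0:ℝ), hInvDeriv μ ν g y := by
    rw [← h1]
    apply intervalIntegral.integral_congr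
    intro y _
    exact (D_even hGe y).symm
  have h2 : hInv μ ν g x = ∫ y in (0:ℝ)..x, hInvDeriv μ ν g y := rfl
  have h3 : hInv μ ν g (-x) = ∫ y in (0:ℝ)..(-x), hInvDeriv μ ν g y := rfl
  rw [h2, h3, intervalIntegral.integral_symm, ← h1']


lemma exp_g_lb (hgb : ∀ x, |g x| ≤ M) (x : ℝ) : (Real.exp M)⁻¹ ≤ Real.exp (g x) := by
  rw [← Real.exp_neg]
  exact Real.exp_le_exp.mpr (neg_le_of_abs_le (hgb x))

lemma exp_g_ub (hgb : ∀ x, |g x| ≤ M) (x : ℝ) : Real.exp (g x) ≤ Real.exp M :=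
  Real.exp_le_exp.mpr (le_of_abs_le (hgb x))

lemma D_lb1 (hν1 : 0 < ν) (hνμ : ν < μ) (hgb : ∀ x, |g x| ≤ M) {x : ℝ}
    (hx : 0 < x) (hx1 : x ≤ 1) :
    (Real.exp M)⁻¹ * x ^ (ν - 1) ≤ hInvDeriv μ ν g x := by
  unfold hInvDeriv
  rw [abs_of_pos hx]
  have hP : (1:ℝ) ≤ (x ^ 2 + 1) ^ ((μ - ν) / 2) :=
    Real.one_le_rpow (by nlinarith) (by linarith)
  have hE := exp_g_lb hgb x
  have hr : (0:ℝ) < x ^ (ν - 1) := Real.rpow_pos_of_pos hx _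
  have hK : (0:ℝ) < (Real.exp M)⁻¹ := by positivity
  calc (Real.exp M)⁻¹ * x ^ (ν - 1) = x ^ (ν - 1) * 1 * (Real.exp M)⁻¹ := by ring
    _ ≤ x ^ (ν - 1) * (x ^ 2 + 1) ^ ((μ - ν) / 2) * Real.exp (g x) :=
        mul3_le le_rfl hP hE hr.le (by norm_num) hK.le hr.le (by linarith)

lemma D_ub1 (hν1 : 0 < ν) (hνμ : ν < μ) (hμ2 : μ ≤ 2) (hgb : ∀ x, |g x| ≤ M) {x : ℝ}
    (hx : 0 < x) (hx1 : x ≤ 1) :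
    hInvDeriv μ ν g x ≤ 2 * Real.exp M * x ^ (ν - 1) := by
  unfold hInvDeriv
  rw [abs_of_pos hx]
  have hP : (x ^ 2 + 1) ^ ((μ - ν) / 2) ≤ 2 := by
    calc (x ^ 2 + 1) ^ ((μ - ν) / 2) ≤ (2:ℝ) ^ ((μ - ν) / 2) :=
          Real.rpow_le_rpow (by positivity) (by nlinarith) (by linarith)
      _ ≤ (2:ℝ) ^ (1:ℝ) := Real.rpow_le_rpow_of_exponent_le one_le_two (by linarith)
      _ = 2 := Real.rpow_one 2
  have hE := exp_g_ub hgb x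
  have hr : (0:ℝ) < x ^ (ν - 1) := Real.rpow_pos_of_pos hx _
  have hPn : (0:ℝ) ≤ (x ^ 2 + 1) ^ ((μ - ν) / 2) := Real.rpow_nonneg (by positivity) _
  calc x ^ (ν - 1) * (x ^ 2 + 1) ^ ((μ - ν) / 2) * Real.exp (g x)
      ≤ x ^ (ν - 1) * 2 * Real.exp M :=
        mul3_le le_rfl hP hE hr.le hPn (Real.exp_pos _).le hr.le (by norm_num)
    _ = 2 * Real.exp M * x ^ (ν - 1) := by ring

lemma sq_rpow_half {x : ℝ} (hx : 0 < x) : (x ^ 2) ^ ((μ - ν) / 2) = x ^ (μ - ν) := by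
  rw [← Real.rpow_natCast x 2, ← Real.rpow_mul hx.le,
    show ((2:ℕ):ℝ) * ((μ - ν) / 2) = μ - ν by push_cast; ring]

lemma D_lb2 (hν1 : 0 < ν) (hνμ : ν < μ) (hgb : ∀ x, |g x| ≤ M) {x : ℝ} (hx : 1 ≤ x) :
    (Real.exp M)⁻¹ * x ^ (μ - 1) ≤ hInvDeriv μ ν g x := by
  have hx0 : (0:ℝ) < x := by linarith
  unfold hInvDeriv
  rw [abs_of_pos hx0]
  have hP : x ^ (μ - ν) ≤ (x ^ 2 + 1) ^ ((μ - ν) / 2) := by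
    rw [← sq_rpow_half hx0]
    exact Real.rpow_le_rpow (by positivity) (by linarith) (by linarith)
  have hE := exp_g_lb hgb x
  have key : (Real.exp M)⁻¹ * x ^ (μ - 1) = x ^ (ν - 1) * x ^ (μ - ν) * (Real.exp M)⁻¹ := by
    rw [← Real.rpow_add hx0]
    ring_nf
  rw [key]
  exact mul3_le le_rfl hP hE (Real.rpow_nonneg hx0.le _) (Real.rpow_nonneg hx0.le _)
    (by positivity) (Real.rpow_nonneg hx0.le _) (Real.rpow_nonneg (by positivity) _)

lemma D_ub2 (hν1 : 0 < ν) (hνμ : ν < μ) (hμ2 : μ ≤ 2) (hgb : ∀ x, |g x| ≤ M) {x : ℝ}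
    (hx : 1 ≤ x) :
    hInvDeriv μ ν g x ≤ 2 * Real.exp M * x ^ (μ - 1) := by
  have hx0 : (0:ℝ) < x := by linarith
  unfold hInvDeriv
  rw [abs_of_pos hx0]
  have hP : (x ^ 2 + 1) ^ ((μ - ν) / 2) ≤ 2 * x ^ (μ - ν) := by
    calc (x ^ 2 + 1) ^ ((μ - ν) / 2) ≤ (2 * x ^ 2) ^ ((μ - ν) / 2) :=
          Real.rpow_le_rpow (by positivity) (by nlinarith) (by linarith)
      _ = (2:ℝ) ^ ((μ - ν) / 2) * (x ^ 2) ^ ((μ - ν) / 2) :=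
          Real.mul_rpow (by norm_num) (by positivity)
      _ ≤ 2 * x ^ (μ - ν) := by
          rw [sq_rpow_half hx0]
          apply mul_le_mul_of_nonneg_right _ (Real.rpow_nonneg hx0.le _)
          calc (2:ℝ) ^ ((μ - ν) / 2) ≤ (2:ℝ) ^ (1:ℝ) :=
                Real.rpow_le_rpow_of_exponent_le one_le_two (by linarith)
            _ = 2 := Real.rpow_one 2
  have hE := exp_g_ub hgb x
  have key : 2 * Real.exp M * x ^ (μ - 1) = x ^ (ν - 1) * (2 * x ^ (μ - ν)) * Real.exp M := by
    rw [show x ^ (ν - 1) * (2 * x ^ (μ - ν)) * Real.exp M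
        = 2 * Real.exp M * (x ^ (ν - 1) * x ^ (μ - ν)) by ring, ← Real.rpow_add hx0]
    ring_nf
  rw [key]
  exact mul3_le le_rfl hP hE (Real.rpow_nonneg hx0.le _)
    (Real.rpow_nonneg (by positivity) _) (Real.exp_pos _).le (Real.rpow_nonneg hx0.le _)
    (by positivity)


lemma integral_c_rpow {c r x : ℝ} (hr : -1 < r) :
    ∫ y in (0:ℝ)..x, c * y ^ r = c * (x ^ (r + 1) / (r + 1)) := by
  rw [intervalIntegral.integral_const_mul, integral_rpow (Or.inl hr),
    Real.zero_rpow (by linarith : r + 1 ≠ 0), sub_zero]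

lemma D_zero (hν2 : ν < 1/2) : hInvDeriv μ ν g 0 = 0 := by
  unfold hInvDeriv
  rw [abs_zero, Real.zero_rpow (by linarith : ν - 1 ≠ 0)]
  ring

lemma hInv_lb1 (hν1 : 0 < ν) (hν2 : ν < 1/2) (hνμ : ν < μ) (hgc : Continuous g)
    (hgb : ∀ x, |g x| ≤ M) {x : ℝ} (hx : 0 < x) (hx1 : x ≤ 1) :
    (Real.exp M)⁻¹ / ν * x ^ ν ≤ hInv μ ν g x := by
  have hle : ∀ y ∈ Icc (0:ℝ) x, (Real.exp M)⁻¹ * y ^ (ν - 1) ≤ hInvDeriv μ ν g y := by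
    intro y hy
    rcases eq_or_lt_of_le hy.1 with h0 | h0
    · rw [← h0, D_zero hν2, Real.zero_rpow (by linarith : ν - 1 ≠ 0)]
      ring_nf
      exact le_rfl
    · exact D_lb1 hν1 hνμ hgb h0 (le_trans hy.2 hx1)
  have hII : IntervalIntegrable (fun y : ℝ => (Real.exp M)⁻¹ * y ^ (ν - 1)) volume 0 x :=
    (intervalIntegrable_rpow' (by linarith)).const_mul _
  have h := intervalIntegral.integral_mono_on hx.le hII (D_II hν1 hgc 0 x) hle
  rw [integral_c_rpow (by linarith)] at h
  rw [show ν - 1 + 1 = ν by ring] at h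
  calc (Real.exp M)⁻¹ / ν * x ^ ν = (Real.exp M)⁻¹ * (x ^ ν / ν) := by ring
    _ ≤ hInv μ ν g x := h

lemma hInv_ub1 (hν1 : 0 < ν) (hν2 : ν < 1/2) (hνμ : ν < μ) (hμ2 : μ ≤ 2)
    (hgc : Continuous g) (hgb : ∀ x, |g x| ≤ M) {x : ℝ} (hx : 0 < x) (hx1 : x ≤ 1) :
    hInv μ ν g x ≤ 2 * Real.exp M / ν * x ^ ν := by
  have hle : ∀ y ∈ Icc (0:ℝ) x, hInvDeriv μ ν g y ≤ 2 * Real.exp M * y ^ (ν - 1) := by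
    intro y hy
    rcases eq_or_lt_of_le hy.1 with h0 | h0
    · rw [← h0, D_zero hν2, Real.zero_rpow (by linarith : ν - 1 ≠ 0)]
      ring_nf
      exact le_rfl
    · exact D_ub1 hν1 hνμ hμ2 hgb h0 (le_trans hy.2 hx1)
  have hII : IntervalIntegrable (fun y : ℝ => 2 * Real.exp M * y ^ (ν - 1)) volume 0 x :=
    (intervalIntegrable_rpow' (by linarith)).const_mul _
  have h := intervalIntegral.integral_mono_on hx.le (D_II hν1 hgc 0 x) hII hle
  rw [integral_c_rpow (by linarith)] at h
  rw [show ν - 1 + 1 = ν by ring] at h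
  calc hInv μ ν g x ≤ 2 * Real.exp M * (x ^ ν / ν) := h
    _ = 2 * Real.exp M / ν * x ^ ν := by ring

lemma integral_c_rpow' {c r : ℝ} {x : ℝ} (hr : -1 < r) :
    ∫ y in (1:ℝ)..x, c * y ^ r = c * ((x ^ (r + 1) - 1) / (r + 1)) := by
  rw [intervalIntegral.integral_const_mul, integral_rpow (Or.inl hr), Real.one_rpow]

lemma hInv_split (hν1 : 0 < ν) (hgc : Continuous g) (x : ℝ) :
    hInv μ ν g x = hInv μ ν g 1 + ∫ y in (1:ℝ)..x, hInvDeriv μ ν g y := by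
  have h := intervalIntegral.integral_add_adjacent_intervals (a := (0:ℝ)) (b := 1) (c := x)
    (f := hInvDeriv μ ν g) (μ := volume) (D_II hν1 hgc 0 1) (D_II hν1 hgc 1 x)
  exact h.symm

lemma hInv_lb2 (hν1 : 0 < ν) (hν2 : ν < 1/2) (hνμ : ν < μ) (hgc : Continuous g)
    (hgb : ∀ x, |g x| ≤ M) {x : ℝ} (hx : 1 ≤ x) :
    (Real.exp M)⁻¹ / μ * x ^ μ ≤ hInv μ ν g x := by
  have hμ0 : 0 < μ := by linarith
  rw [hInv_split hν1 hgc x]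
  have h1 : (Real.exp M)⁻¹ / ν ≤ hInv μ ν g 1 := by
    have := hInv_lb1 hν1 hν2 hνμ hgc hgb one_pos le_rfl
    rwa [Real.one_rpow, mul_one] at this
  have hle : ∀ y ∈ Icc (1:ℝ) x, (Real.exp M)⁻¹ * y ^ (μ - 1) ≤ hInvDeriv μ ν g y :=
    fun y hy => D_lb2 hν1 hνμ hgb hy.1
  have hII : IntervalIntegrable (fun y : ℝ => (Real.exp M)⁻¹ * y ^ (μ - 1)) volume 1 x :=
    (intervalIntegrable_rpow' (by linarith)).const_mul _
  have h2 := intervalIntegral.integral_mono_on hx hII (D_II hν1 hgc 1 x) hle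
  rw [integral_c_rpow' (by linarith), show μ - 1 + 1 = μ by ring] at h2
  have hνμ' : (Real.exp M)⁻¹ / μ ≤ (Real.exp M)⁻¹ / ν :=
    div_le_div_of_nonneg_left (by positivity) hν1 (by linarith)
  have hKpos : (0:ℝ) < (Real.exp M)⁻¹ := by positivity
  calc (Real.exp M)⁻¹ / μ * x ^ μ
      = (Real.exp M)⁻¹ / μ + (Real.exp M)⁻¹ * ((x ^ μ - 1) / μ) := by field_simp; ring
    _ ≤ hInv μ ν g 1 + ∫ y in (1:ℝ)..x, hInvDeriv μ ν g y := by
        apply add_le_add (le_trans hνμ' h1) h2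

lemma hInv_ub2 (hν1 : 0 < ν) (hν2 : ν < 1/2) (hνμ : ν < μ) (hμ2 : μ ≤ 2)
    (hgc : Continuous g) (hgb : ∀ x, |g x| ≤ M) {x : ℝ} (hx : 1 ≤ x) :
    hInv μ ν g x ≤ 2 * Real.exp M * (1/ν + 1/μ) * x ^ μ := by
  have hμ0 : 0 < μ := by linarith
  rw [hInv_split hν1 hgc x]
  have h1 : hInv μ ν g 1 ≤ 2 * Real.exp M / ν := by
    have := hInv_ub1 hν1 hν2 hνμ hμ2 hgc hgb one_pos le_rfl
    rwa [Real.one_rpow, mul_one] at this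
  have hle : ∀ y ∈ Icc (1:ℝ) x, hInvDeriv μ ν g y ≤ 2 * Real.exp M * y ^ (μ - 1) :=
    fun y hy => D_ub2 hν1 hνμ hμ2 hgb hy.1
  have hII : IntervalIntegrable (fun y : ℝ => 2 * Real.exp M * y ^ (μ - 1)) volume 1 x :=
    (intervalIntegrable_rpow' (by linarith)).const_mul _
  have h2 := intervalIntegral.integral_mono_on hx (D_II hν1 hgc 1 x) hII hle
  rw [integral_c_rpow' (by linarith), show μ - 1 + 1 = μ by ring] at h2
  have hxμ : (1:ℝ) ≤ x ^ μ := Real.one_le_rpow hx hμ0.le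
  have hKpos : (0:ℝ) < Real.exp M := Real.exp_pos M
  calc hInv μ ν g 1 + ∫ y in (1:ℝ)..x, hInvDeriv μ ν g y
      ≤ 2 * Real.exp M / ν + 2 * Real.exp M * ((x ^ μ - 1) / μ) := add_le_add h1 h2
    _ ≤ 2 * Real.exp M / ν * x ^ μ + 2 * Real.exp M / μ * x ^ μ := by
        have e1 : 2 * Real.exp M / ν ≤ 2 * Real.exp M / ν * x ^ μ := by
          nth_rewrite 1 [← mul_one (2 * Real.exp M / ν)]
          apply mul_le_mul_of_nonneg_left hxμ (by positivity)
        have e2 : 2 * Real.exp M * ((x ^ μ - 1) / μ) ≤ 2 * Real.exp M / μ * x ^ μ := by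
          rw [show 2 * Real.exp M / μ * x ^ μ = 2 * Real.exp M * (x ^ μ / μ) by ring]
          gcongr
          linarith
        linarith
    _ = 2 * Real.exp M * (1/ν + 1/μ) * x ^ μ := by field_simp

lemma hInv_pos (hν1 : 0 < ν) (hν2 : ν < 1/2) (hνμ : ν < μ) (hgc : Continuous g)
    (hgb : ∀ x, |g x| ≤ M) {x : ℝ} (hx : 0 < x) : 0 < hInv μ ν g x := by
  rcases le_or_gt x 1 with h | h
  · calc (0:ℝ) < (Real.exp M)⁻¹ / ν * x ^ ν := by
          have := Real.rpow_pos_of_pos hx ν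
          positivity
      _ ≤ hInv μ ν g x := hInv_lb1 hν1 hν2 hνμ hgc hgb hx h
  · calc (0:ℝ) < (Real.exp M)⁻¹ / μ * x ^ μ := by
          have := Real.rpow_pos_of_pos hx μ
          have : 0 < μ := by linarith
          positivity
      _ ≤ hInv μ ν g x := hInv_lb2 hν1 hν2 hνμ hgc hgb h.le

end PartB


noncomputable def psiF (μ ν M : ℝ) (x : ℝ) : ℝ :=
  (2 * Real.exp M ^ 2) * min (|x| ^ (-(2*ν))) (|x| ^ (-(2*μ)))

noncomputable def IhighC (μ ν M : ℝ) : ℝ := ∫ x : ℝ, psiF μ ν M x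

noncomputable def IlowC (μ ν M : ℝ) : ℝ :=
  2 * (1 / (2 * Real.exp M * (2 * Real.exp M * (1/ν + 1/μ))) * (1/16))

section
variable {μ ν M : ℝ}

lemma psiF_nonneg (x : ℝ) (hM : 0 < M) : 0 ≤ psiF μ ν M x := by
  unfold psiF
  have : 0 ≤ |x| ^ (-(2*ν)) := Real.rpow_nonneg (abs_nonneg x) _
  have : 0 ≤ |x| ^ (-(2*μ)) := Real.rpow_nonneg (abs_nonneg x) _
  positivity

lemma psiF_even (x : ℝ) : psiF μ ν M (-x) = psiF μ ν M x := by
  unfold psiF; rw [abs_neg]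

lemma psiF_eq_small (hν1 : 0 < ν) (hνμ : ν < μ) {x : ℝ} (hx : 0 < x) (hx1 : x ≤ 1) :
    psiF μ ν M x = (2 * Real.exp M ^ 2) * x ^ (-(2*ν)) := by
  unfold psiF
  rw [abs_of_pos hx, min_eq_left]
  exact Real.rpow_le_rpow_of_exponent_ge hx hx1 (by linarith)

lemma psiF_eq_large (hν1 : 0 < ν) (hνμ : ν < μ) {x : ℝ} (hx : 1 ≤ x) :
    psiF μ ν M x = (2 * Real.exp M ^ 2) * x ^ (-(2*μ)) := by
  unfold psiF
  rw [abs_of_pos (by linarith), min_eq_right]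
  exact Real.rpow_le_rpow_of_exponent_le hx (by linarith)

lemma psiF_contOn (hν1 : 0 < ν) (hμ1 : 1/2 < μ) : ContinuousOn (psiF μ ν M) (Ioi 0) := by
  unfold psiF
  apply ContinuousOn.mul continuousOn_const
  have h1 : ContinuousOn (fun x : ℝ => |x| ^ (-(2*ν))) (Ioi 0) :=
    (continuous_abs.continuousOn).rpow_const
      (fun x hx => Or.inl (by simp [abs_ne_zero]; exact ne_of_gt hx))
  have h2 : ContinuousOn (fun x : ℝ => |x| ^ (-(2*μ))) (Ioi 0) :=
    (continuous_abs.continuousOn).rpow_const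
      (fun x hx => Or.inl (by simp [abs_ne_zero]; exact ne_of_gt hx))
  exact continuous_min.comp_continuousOn (h1.prodMk h2)

lemma psiF_intOn (hμ1 : 1/2 < μ) (hν1 : 0 < ν) (hν2 : ν < 1/2) :
    IntegrableOn (psiF μ ν M) (Ioi 0) := by
  have hνμ : ν < μ := by linarith
  have h1 : IntegrableOn (psiF μ ν M) (Ioc 0 1) := by
    have hbase : IntegrableOn (fun x : ℝ => x ^ (-(2*ν))) (Ioc (0:ℝ) 1) := by
      rw [← intervalIntegrable_iff_integrableOn_Ioc_of_le zero_le_one]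
      exact intervalIntegrable_rpow' (by linarith)
    have hb2 : IntegrableOn (fun x : ℝ => (2 * Real.exp M ^ 2) * x ^ (-(2*ν))) (Ioc (0:ℝ) 1) :=
      hbase.const_mul _
    exact hb2.congr_fun (fun x hx => (psiF_eq_small hν1 hνμ hx.1 hx.2).symm) measurableSet_Ioc
  have h2 : IntegrableOn (psiF μ ν M) (Ioi 1) := by
    have hbase : IntegrableOn (fun x : ℝ => x ^ (-(2*μ))) (Ioi (1:ℝ)) :=
      integrableOn_Ioi_rpow_of_lt (by linarith) one_pos
    have hb2 : IntegrableOn (fun x : ℝ => (2 * Real.exp M ^ 2) * x ^ (-(2*μ))) (Ioi (1:ℝ)) :=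
      hbase.const_mul _
    exact hb2.congr_fun (fun x hx => (psiF_eq_large hν1 hνμ (le_of_lt hx)).symm) measurableSet_Ioi
  have : Ioc (0:ℝ) 1 ∪ Ioi 1 = Ioi 0 := Ioc_union_Ioi_eq_Ioi zero_le_one
  rw [← this]
  exact h1.union h2

lemma IhighC_eq (hμ1 : 1/2 < μ) (hν1 : 0 < ν) :
    IhighC μ ν M = 2 * ∫ x in Ioi (0:ℝ), psiF μ ν M x := by
  unfold IhighC
  have key : (∫ x : ℝ, psiF μ ν M x) = ∫ x : ℝ, psiF μ ν M |x| := by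
    congr 1
    funext x
    rcases le_or_gt 0 x with h | h
    · rw [abs_of_nonneg h]
    · rw [abs_of_neg h, psiF_even]
  rw [key, integral_comp_abs (f := psiF μ ν M)]

lemma sixteen_bound (hμ0 : 0 < μ) (hμ2 : μ ≤ 2) {x : ℝ} (hx1 : 1 ≤ x) (hx2 : x ≤ 2) :
    (1:ℝ)/16 ≤ x ^ (-(2*μ)) := by
  have hx0 : (0:ℝ) < x := by linarith
  rw [Real.rpow_neg (le_of_lt hx0)]
  rw [show (1:ℝ)/16 = ((16:ℝ))⁻¹ by norm_num]
  apply inv_anti₀ (Real.rpow_pos_of_pos hx0 _)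
  calc x ^ (2*μ) ≤ 2 ^ (2*μ) := Real.rpow_le_rpow (le_of_lt hx0) hx2 (by nlinarith)
    _ ≤ 2 ^ (4:ℝ) := Real.rpow_le_rpow_of_exponent_le one_le_two (by linarith)
    _ = 16 := by
        rw [show (4:ℝ) = ((4:ℕ):ℝ) by norm_num, Real.rpow_natCast]; norm_num

lemma IhighC_lb (hμ1 : 1/2 < μ) (hμ2 : μ ≤ 2) (hν1 : 0 < ν) (hν2 : ν < 1/2) (hM : 0 < M) :
    Real.exp M ^ 2 / 4 ≤ IhighC μ ν M := by
  have hνμ : ν < μ := by linarith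
  rw [IhighC_eq hμ1 hν1]
  have hmono : ∫ x in Ioc (1:ℝ) 2, psiF μ ν M x ≤ ∫ x in Ioi (0:ℝ), psiF μ ν M x := by
    apply setIntegral_mono_set (psiF_intOn hμ1 hν1 hν2)
    · filter_upwards with x using psiF_nonneg x hM
    · filter_upwards with x hx
      exact lt_trans one_pos (hx.1 : (1:ℝ) < x)
  have hconst : Real.exp M ^ 2 / 8 * (volume (Ioc (1:ℝ) 2)).toReal
      ≤ ∫ x in Ioc (1:ℝ) 2, psiF μ ν M x := by
    apply setIntegral_ge_of_const_le_real (μ := volume) (s := Ioc (1:ℝ) 2) measurableSet_Ioc (by simp)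
    · intro x hx
      rw [psiF_eq_large hν1 hνμ (le_of_lt hx.1)]
      have := sixteen_bound (by linarith) hμ2 (le_of_lt hx.1) hx.2
      nlinarith [Real.exp_pos M, sq_nonneg (Real.exp M)]
    · exact (psiF_intOn hμ1 hν1 hν2).mono_set (fun x hx => lt_trans one_pos hx.1)
  have hvol : (volume (Ioc (1:ℝ) 2)).toReal = 1 := by
    rw [Real.volume_Ioc]; norm_num
  rw [hvol, mul_one] at hconst
  linarith

lemma IlowC_pos (hμ1 : 1/2 < μ) (hν1 : 0 < ν) (hM : 0 < M) : 0 < IlowC μ ν M := by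
  unfold IlowC
  have := Real.exp_pos M
  have : 0 < 1/ν + 1/μ := by positivity
  positivity

lemma IlowC_le_IhighC (hμ1 : 1/2 < μ) (hμ2 : μ ≤ 2) (hν1 : 0 < ν) (hν2 : ν < 1/2) (hM : 0 < M) :
    IlowC μ ν M ≤ IhighC μ ν M := by
  have h := IhighC_lb hμ1 hμ2 hν1 hν2 hM
  have hK : 1 ≤ Real.exp M := Real.one_le_exp (le_of_lt hM)
  have hμ0 : 0 < μ := by linarith
  have hsum : 2 ≤ 1/ν + 1/μ := by
    have h1 : 2 < 1/ν := by rw [lt_div_iff₀ hν1]; linarith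
    have h2 : 0 < 1/μ := by positivity
    linarith
  unfold IlowC
  have hden : 8 * Real.exp M ^ 2 ≤ 2 * Real.exp M * (2 * Real.exp M * (1/ν + 1/μ)) := by
    nlinarith
  have h8 : (0:ℝ) < 8 * Real.exp M ^ 2 := by positivity
  have : 1 / (2 * Real.exp M * (2 * Real.exp M * (1/ν + 1/μ))) ≤ 1 / (8 * Real.exp M ^ 2) := by
    apply one_div_le_one_div_of_le h8 hden
  calc 2 * (1 / (2 * Real.exp M * (2 * Real.exp M * (1/ν + 1/μ))) * (1/16))
      ≤ 2 * (1 / (8 * Real.exp M ^ 2) * (1/16)) := by nlinarith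
    _ ≤ Real.exp M ^ 2 / 4 := by
        have hK2 : 1 ≤ Real.exp M ^ 2 := by nlinarith
        have h18 : 1 / (8 * Real.exp M ^ 2) ≤ 1/8 := by
          apply one_div_le_one_div_of_le (by norm_num) (by nlinarith)
        nlinarith
    _ ≤ IhighC μ ν M := h

end

noncomputable def Sl1C (ν M : ℝ) : ℝ := (Real.exp M)⁻¹ / ν * ((Real.exp M)⁻¹) ^ 2
noncomputable def Su1C (ν M : ℝ) : ℝ := 2 * Real.exp M / ν * (2 * Real.exp M) ^ 2
noncomputable def Sl2C (μ M : ℝ) : ℝ := (Real.exp M)⁻¹ / μ * ((Real.exp M)⁻¹) ^ 2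
noncomputable def Su2C (μ ν M : ℝ) : ℝ := 2 * Real.exp M * (1/ν + 1/μ) * (2 * Real.exp M) ^ 2
noncomputable def kapLC (μ ν M : ℝ) : ℝ := (μ - ν) * Real.pi / IhighC μ ν M
noncomputable def kapUC (μ ν M : ℝ) : ℝ := (μ - ν) * Real.pi / IlowC μ ν M

lemma div_c_rpow {a c x e : ℝ} (hx : 0 < x) : a / (c * x ^ e) = (a / c) * x ^ (-e) := by
  rw [Real.rpow_neg hx.le, div_mul_eq_div_div, div_eq_mul_inv (a/c)]

lemma one_div_crpow {c x e : ℝ} (hx : 0 < x) : 1 / (c * x ^ e) = (1 / c) * x ^ (-e) :=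
  div_c_rpow hx

section PartC
variable {μ ν M : ℝ} {g : ℝ → ℝ}

lemma Q_lb1 (hν1 : 0 < ν) (hν2 : ν < 1/2) (hνμ : ν < μ) (hgc : Continuous g)
    (hgb : ∀ x, |g x| ≤ M) {x : ℝ} (hx : 0 < x) (hx1 : x ≤ 1) :
    ((Real.exp M)⁻¹ / ν * (Real.exp M)⁻¹) * x ^ (2 * ν)
      ≤ x * hInv μ ν g x * hInvDeriv μ ν g x := by
  have e : x * ((Real.exp M)⁻¹ / ν * x ^ ν) * ((Real.exp M)⁻¹ * x ^ (ν - 1))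
      = ((Real.exp M)⁻¹ / ν * (Real.exp M)⁻¹) * x ^ (2 * ν) := by
    rw [show x * ((Real.exp M)⁻¹ / ν * x ^ ν) * ((Real.exp M)⁻¹ * x ^ (ν - 1))
        = ((Real.exp M)⁻¹ / ν * (Real.exp M)⁻¹) * (x * x ^ ν * x ^ (ν - 1)) by ring,
      x_mul_rpow hx, show 1 + ν + (ν - 1) = 2 * ν by ring]
  rw [← e]
  have s1 : x * ((Real.exp M)⁻¹ / ν * x ^ ν) ≤ x * hInv μ ν g x :=
    mul_le_mul_of_nonneg_left (hInv_lb1 hν1 hν2 hνμ hgc hgb hx hx1) hx.le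
  apply mul_le_mul s1 (D_lb1 hν1 hνμ hgb hx hx1)
    (by positivity)
    (mul_nonneg hx.le (hInv_pos hν1 hν2 hνμ hgc hgb hx).le)

lemma Q_lb2 (hν1 : 0 < ν) (hν2 : ν < 1/2) (hνμ : ν < μ) (hgc : Continuous g)
    (hgb : ∀ x, |g x| ≤ M) {x : ℝ} (hx : 1 ≤ x) :
    ((Real.exp M)⁻¹ / μ * (Real.exp M)⁻¹) * x ^ (2 * μ)
      ≤ x * hInv μ ν g x * hInvDeriv μ ν g x := by
  have hx0 : (0:ℝ) < x := by linarith
  have hμ0 : (0:ℝ) < μ := by linarith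
  have e : x * ((Real.exp M)⁻¹ / μ * x ^ μ) * ((Real.exp M)⁻¹ * x ^ (μ - 1))
      = ((Real.exp M)⁻¹ / μ * (Real.exp M)⁻¹) * x ^ (2 * μ) := by
    rw [show x * ((Real.exp M)⁻¹ / μ * x ^ μ) * ((Real.exp M)⁻¹ * x ^ (μ - 1))
        = ((Real.exp M)⁻¹ / μ * (Real.exp M)⁻¹) * (x * x ^ μ * x ^ (μ - 1)) by ring,
      x_mul_rpow hx0, show 1 + μ + (μ - 1) = 2 * μ by ring]
  rw [← e]
  have s1 : x * ((Real.exp M)⁻¹ / μ * x ^ μ) ≤ x * hInv μ ν g x :=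
    mul_le_mul_of_nonneg_left (hInv_lb2 hν1 hν2 hνμ hgc hgb hx) hx0.le
  apply mul_le_mul s1 (D_lb2 hν1 hνμ hgb hx)
    (by positivity)
    (mul_nonneg hx0.le (hInv_pos hν1 hν2 hνμ hgc hgb hx0).le)

lemma Q_ub2 (hν1 : 0 < ν) (hν2 : ν < 1/2) (hνμ : ν < μ) (hμ2 : μ ≤ 2) (hgc : Continuous g)
    (hgb : ∀ x, |g x| ≤ M) {x : ℝ} (hx : 1 ≤ x) :
    x * hInv μ ν g x * hInvDeriv μ ν g x
      ≤ (2 * Real.exp M * (1/ν + 1/μ) * (2 * Real.exp M)) * x ^ (2 * μ) := by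
  have hx0 : (0:ℝ) < x := by linarith
  have hμ0 : (0:ℝ) < μ := by linarith
  have e : x * (2 * Real.exp M * (1/ν + 1/μ) * x ^ μ) * (2 * Real.exp M * x ^ (μ - 1))
      = (2 * Real.exp M * (1/ν + 1/μ) * (2 * Real.exp M)) * x ^ (2 * μ) := by
    rw [show x * (2 * Real.exp M * (1/ν + 1/μ) * x ^ μ) * (2 * Real.exp M * x ^ (μ - 1))
        = (2 * Real.exp M * (1/ν + 1/μ) * (2 * Real.exp M)) * (x * x ^ μ * x ^ (μ - 1)) by ring,
      x_mul_rpow hx0, show 1 + μ + (μ - 1) = 2 * μ by ring]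
  rw [← e]
  have s1 : x * hInv μ ν g x ≤ x * (2 * Real.exp M * (1/ν + 1/μ) * x ^ μ) :=
    mul_le_mul_of_nonneg_left (hInv_ub2 hν1 hν2 hνμ hμ2 hgc hgb hx) hx0.le
  apply mul_le_mul s1 (D_ub2 hν1 hνμ hμ2 hgb hx) (D_nonneg x)
    (by positivity)

lemma Q_pos (hν1 : 0 < ν) (hν2 : ν < 1/2) (hνμ : ν < μ) (hgc : Continuous g)
    (hgb : ∀ x, |g x| ≤ M) {x : ℝ} (hx : 0 < x) :
    0 < x * hInv μ ν g x * hInvDeriv μ ν g x := by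
  have h1 := hInv_pos hν1 hν2 hνμ hgc hgb hx
  have h2 : 0 < hInvDeriv μ ν g x := by
    unfold hInvDeriv
    have : (0:ℝ) < |x| ^ (ν - 1) := Real.rpow_pos_of_pos (abs_pos.mpr hx.ne') _
    have : (0:ℝ) < (x ^ 2 + 1) ^ ((μ - ν) / 2) := Real.rpow_pos_of_pos (by positivity) _
    positivity
  positivity

lemma f_ub (hμ2 : μ ≤ 2) (hν1 : 0 < ν) (hν2 : ν < 1/2) (hνμ : ν < μ) (hgc : Continuous g)
    (hgb : ∀ x, |g x| ≤ M) {x : ℝ} (hx : 0 < x) :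
    1 / (x * hInv μ ν g x * hInvDeriv μ ν g x) ≤ psiF μ ν M x := by
  have hK : (0:ℝ) < Real.exp M := Real.exp_pos M
  rcases le_or_gt x 1 with h1 | h1
  · have hq := Q_lb1 hν1 hν2 hνμ hgc hgb hx h1
    have hc : (0:ℝ) < (Real.exp M)⁻¹ / ν * (Real.exp M)⁻¹ := by positivity
    calc 1 / (x * hInv μ ν g x * hInvDeriv μ ν g x)
        ≤ 1 / (((Real.exp M)⁻¹ / ν * (Real.exp M)⁻¹) * x ^ (2 * ν)) := by
          have hrp := Real.rpow_pos_of_pos hx (2*ν)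
          apply one_div_le_one_div_of_le (by positivity) hq
      _ = (1 / ((Real.exp M)⁻¹ / ν * (Real.exp M)⁻¹)) * x ^ (-(2 * ν)) := one_div_crpow hx
      _ = (ν * Real.exp M ^ 2) * x ^ (-(2 * ν)) := by
          rw [show 1 / ((Real.exp M)⁻¹ / ν * (Real.exp M)⁻¹) = ν * Real.exp M ^ 2 by
            field_simp]
      _ ≤ (2 * Real.exp M ^ 2) * x ^ (-(2 * ν)) := by
          apply mul_le_mul_of_nonneg_right (by nlinarith) (Real.rpow_nonneg hx.le _)
      _ = psiF μ ν M x := (psiF_eq_small hν1 hνμ hx h1).symm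
  · have hq := Q_lb2 hν1 hν2 hνμ hgc hgb h1.le
    have hμ0 : (0:ℝ) < μ := by linarith
    have hc : (0:ℝ) < (Real.exp M)⁻¹ / μ * (Real.exp M)⁻¹ := by positivity
    calc 1 / (x * hInv μ ν g x * hInvDeriv μ ν g x)
        ≤ 1 / (((Real.exp M)⁻¹ / μ * (Real.exp M)⁻¹) * x ^ (2 * μ)) := by
          have hrp := Real.rpow_pos_of_pos hx (2*μ)
          apply one_div_le_one_div_of_le (by positivity) hq
      _ = (1 / ((Real.exp M)⁻¹ / μ * (Real.exp M)⁻¹)) * x ^ (-(2 * μ)) := one_div_crpow hx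
      _ = (μ * Real.exp M ^ 2) * x ^ (-(2 * μ)) := by
          rw [show 1 / ((Real.exp M)⁻¹ / μ * (Real.exp M)⁻¹) = μ * Real.exp M ^ 2 by
            field_simp]
      _ ≤ (2 * Real.exp M ^ 2) * x ^ (-(2 * μ)) := by
          apply mul_le_mul_of_nonneg_right (by nlinarith) (Real.rpow_nonneg hx.le _)
      _ = psiF μ ν M x := (psiF_eq_large hν1 hνμ h1.le).symm

lemma rpow_2mu_le16 (hμ0 : 0 < μ) (hμ2 : μ ≤ 2) {x : ℝ} (hx1 : 1 ≤ x) (hx2 : x ≤ 2) :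
    x ^ (2 * μ) ≤ 16 := by
  have hx0 : (0:ℝ) < x := by linarith
  calc x ^ (2*μ) ≤ 2 ^ (2*μ) := Real.rpow_le_rpow (le_of_lt hx0) hx2 (by nlinarith)
    _ ≤ 2 ^ (4:ℝ) := Real.rpow_le_rpow_of_exponent_le one_le_two (by linarith)
    _ = 16 := by
        rw [show (4:ℝ) = ((4:ℕ):ℝ) by norm_num, Real.rpow_natCast]; norm_num

lemma f_lb_mid (hμ1 : 1/2 < μ) (hμ2 : μ ≤ 2) (hν1 : 0 < ν) (hν2 : ν < 1/2)
    (hgc : Continuous g) (hgb : ∀ x, |g x| ≤ M) {x : ℝ} (hx1 : 1 ≤ x) (hx2 : x ≤ 2) :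
    1 / (2 * Real.exp M * (2 * Real.exp M * (1/ν + 1/μ))) * (1/16)
      ≤ 1 / (x * hInv μ ν g x * hInvDeriv μ ν g x) := by
  have hνμ : ν < μ := by linarith
  have hμ0 : (0:ℝ) < μ := by linarith
  have hx0 : (0:ℝ) < x := by linarith
  have hK : (0:ℝ) < Real.exp M := Real.exp_pos M
  have hsum : (0:ℝ) < 1/ν + 1/μ := by positivity
  have hq := Q_ub2 hν1 hν2 hνμ hμ2 hgc hgb hx1
  have h16 := rpow_2mu_le16 hμ0 hμ2 hx1 hx2
  have hC : (0:ℝ) < 2 * Real.exp M * (1/ν + 1/μ) * (2 * Real.exp M) := by positivity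
  have step : x * hInv μ ν g x * hInvDeriv μ ν g x
      ≤ (2 * Real.exp M * (1/ν + 1/μ) * (2 * Real.exp M)) * 16 := by
    refine le_trans hq ?_
    apply mul_le_mul_of_nonneg_left h16 hC.le
  calc 1 / (2 * Real.exp M * (2 * Real.exp M * (1/ν + 1/μ))) * (1/16)
      = 1 / ((2 * Real.exp M * (1/ν + 1/μ) * (2 * Real.exp M)) * 16) := by
        rw [div_mul_div_comm, one_mul]
        congr 1
        ring
    _ ≤ 1 / (x * hInv μ ν g x * hInvDeriv μ ν g x) :=
        one_div_le_one_div_of_le (Q_pos hν1 hν2 hνμ hgc hgb hx0) step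

end PartC

section PartD
variable {μ ν M : ℝ} {g : ℝ → ℝ}

lemma D_contOn (hgc : Continuous g) : ContinuousOn (hInvDeriv μ ν g) (Ioi 0) := by
  unfold hInvDeriv
  apply ContinuousOn.mul
  apply ContinuousOn.mul
  · exact (continuous_abs.continuousOn).rpow_const
      (fun x hx => Or.inl (by simp only [abs_ne_zero]; exact ne_of_gt hx))
  · exact ((continuous_pow 2 |>.add continuous_const).rpow_const
      (fun x => Or.inl (by positivity : (x:ℝ) ^ 2 + 1 ≠ 0))).continuousOn
  · exact (Real.continuous_exp.comp hgc).continuousOn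

lemma f_contOn (hν1 : 0 < ν) (hν2 : ν < 1/2) (hνμ : ν < μ) (hgc : Continuous g)
    (hgb : ∀ x, |g x| ≤ M) :
    ContinuousOn (fun x => 1 / (x * hInv μ ν g x * hInvDeriv μ ν g x)) (Ioi 0) := by
  apply ContinuousOn.div continuousOn_const
  · exact ((continuousOn_id.mul (hInv_cont hν1 hgc).continuousOn).mul (D_contOn hgc))
  · exact fun x hx => (Q_pos hν1 hν2 hνμ hgc hgb hx).ne'

lemma f_intOn (hμ1 : 1/2 < μ) (hμ2 : μ ≤ 2) (hν1 : 0 < ν) (hν2 : ν < 1/2)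
    (hgc : Continuous g) (hgb : ∀ x, |g x| ≤ M) :
    IntegrableOn (fun x => 1 / (x * hInv μ ν g x * hInvDeriv μ ν g x)) (Ioi 0) := by
  have hνμ : ν < μ := by linarith
  apply Integrable.mono' (psiF_intOn hμ1 hν1 hν2)
    ((f_contOn hν1 hν2 hνμ hgc hgb).aestronglyMeasurable measurableSet_Ioi)
  filter_upwards [ae_restrict_mem measurableSet_Ioi] with x hx
  rw [Real.norm_eq_abs, abs_of_nonneg (le_of_lt (one_div_pos.mpr (Q_pos hν1 hν2 hνμ hgc hgb hx)))]
  exact f_ub hμ2 hν1 hν2 hνμ hgc hgb hx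

lemma I_eq (hν1 : 0 < ν) (hν2 : ν < 1/2) (hgc : Continuous g)
    (hGe : ∀ x, Gfun μ ν g (-x) = Gfun μ ν g x) :
    (∫ x : ℝ, 1 / (x * hInv μ ν g x * hInvDeriv μ ν g x))
      = 2 * ∫ x in Ioi (0:ℝ), 1 / (x * hInv μ ν g x * hInvDeriv μ ν g x) := by
  have key : (∫ x : ℝ, 1 / (x * hInv μ ν g x * hInvDeriv μ ν g x))
      = ∫ x : ℝ, 1 / (|x| * hInv μ ν g |x| * hInvDeriv μ ν g |x|) := by
    congr 1
    funext x
    rcases le_or_gt 0 x with h | h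
    · rw [abs_of_nonneg h]
    · rw [abs_of_neg h, hInv_odd hν1 hgc hGe, D_even hGe]
      congr 1
      ring
  rw [key]
  exact integral_comp_abs (f := fun x => 1 / (x * hInv μ ν g x * hInvDeriv μ ν g x))

lemma I_lb (hμ1 : 1/2 < μ) (hμ2 : μ ≤ 2) (hν1 : 0 < ν) (hν2 : ν < 1/2)
    (hgc : Continuous g) (hGe : ∀ x, Gfun μ ν g (-x) = Gfun μ ν g x)
    (hgb : ∀ x, |g x| ≤ M) :
    IlowC μ ν M ≤ ∫ x : ℝ, 1 / (x * hInv μ ν g x * hInvDeriv μ ν g x) := by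
  have hνμ : ν < μ := by linarith
  rw [I_eq hν1 hν2 hgc hGe]
  have hsub : Ioc (1:ℝ) 2 ⊆ Ioi 0 := fun x hx => lt_trans one_pos hx.1
  have h1 : 1 / (2 * Real.exp M * (2 * Real.exp M * (1/ν + 1/μ))) * (1/16)
        * (volume (Ioc (1:ℝ) 2)).toReal
      ≤ ∫ x in Ioc (1:ℝ) 2, 1 / (x * hInv μ ν g x * hInvDeriv μ ν g x) := by
    apply setIntegral_ge_of_const_le_real (μ := volume) (s := Ioc (1:ℝ) 2) measurableSet_Ioc (by simp)
    · exact fun x hx => f_lb_mid hμ1 hμ2 hν1 hν2 hgc hgb hx.1.le hx.2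
    · exact (f_intOn hμ1 hμ2 hν1 hν2 hgc hgb).mono_set hsub
  have hvol : (volume (Ioc (1:ℝ) 2)).toReal = 1 := by
    rw [Real.volume_Ioc]; norm_num
  rw [hvol, mul_one] at h1
  have h2 : ∫ x in Ioc (1:ℝ) 2, 1 / (x * hInv μ ν g x * hInvDeriv μ ν g x)
      ≤ ∫ x in Ioi (0:ℝ), 1 / (x * hInv μ ν g x * hInvDeriv μ ν g x) := by
    apply setIntegral_mono_set (f_intOn hμ1 hμ2 hν1 hν2 hgc hgb)
    · filter_upwards [ae_restrict_mem measurableSet_Ioi] with x hx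
      exact le_of_lt (one_div_pos.mpr (Q_pos hν1 hν2 hνμ hgc hgb hx))
    · exact HasSubset.Subset.eventuallyLE hsub
  unfold IlowC
  linarith

lemma I_ub (hμ1 : 1/2 < μ) (hμ2 : μ ≤ 2) (hν1 : 0 < ν) (hν2 : ν < 1/2)
    (hgc : Continuous g) (hGe : ∀ x, Gfun μ ν g (-x) = Gfun μ ν g x)
    (hgb : ∀ x, |g x| ≤ M) :
    (∫ x : ℝ, 1 / (x * hInv μ ν g x * hInvDeriv μ ν g x)) ≤ IhighC μ ν M := by
  have hνμ : ν < μ := by linarith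
  rw [I_eq hν1 hν2 hgc hGe, IhighC_eq hμ1 hν1]
  have h := setIntegral_mono_on (f_intOn hμ1 hμ2 hν1 hν2 hgc hgb) (psiF_intOn hμ1 hν1 hν2)
    measurableSet_Ioi (fun x hx => f_ub hμ2 hν1 hν2 hνμ hgc hgb hx)
  linarith

lemma IhighC_pos (hμ1 : 1/2 < μ) (hμ2 : μ ≤ 2) (hν1 : 0 < ν) (hν2 : ν < 1/2) (hM : 0 < M) :
    0 < IhighC μ ν M :=
  lt_of_lt_of_le (by positivity) (IhighC_lb hμ1 hμ2 hν1 hν2 hM)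

lemma kappa_lb (hμ1 : 1/2 < μ) (hμ2 : μ ≤ 2) (hν1 : 0 < ν) (hν2 : ν < 1/2) (hM : 0 < M)
    (hgc : Continuous g) (hGe : ∀ x, Gfun μ ν g (-x) = Gfun μ ν g x)
    (hgb : ∀ x, |g x| ≤ M) :
    kapLC μ ν M ≤ kappa μ ν g := by
  have hI1 := I_lb hμ1 hμ2 hν1 hν2 hgc hGe hgb (M := M)
  have hI2 := I_ub hμ1 hμ2 hν1 hν2 hgc hGe hgb (M := M)
  have hIlow := IlowC_pos hμ1 hν1 hM (ν := ν)
  have hIpos : 0 < ∫ x : ℝ, 1 / (x * hInv μ ν g x * hInvDeriv μ ν g x) := lt_of_lt_of_le hIlow hI1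
  have hIhigh := IhighC_pos hμ1 hμ2 hν1 hν2 hM
  have hN : 0 < (μ - ν) * Real.pi := by
    have := Real.pi_pos
    have : ν < μ := by linarith
    nlinarith [Real.pi_pos]
  unfold kapLC kappa
  rw [div_le_div_iff₀ hIhigh hIpos]
  exact mul_le_mul_of_nonneg_left hI2 hN.le

lemma kappa_ub (hμ1 : 1/2 < μ) (hμ2 : μ ≤ 2) (hν1 : 0 < ν) (hν2 : ν < 1/2) (hM : 0 < M)
    (hgc : Continuous g) (hGe : ∀ x, Gfun μ ν g (-x) = Gfun μ ν g x)
    (hgb : ∀ x, |g x| ≤ M) :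
    kappa μ ν g ≤ kapUC μ ν M := by
  have hI1 := I_lb hμ1 hμ2 hν1 hν2 hgc hGe hgb (M := M)
  have hIlow := IlowC_pos hμ1 hν1 hM (ν := ν)
  have hIpos : 0 < ∫ x : ℝ, 1 / (x * hInv μ ν g x * hInvDeriv μ ν g x) := lt_of_lt_of_le hIlow hI1
  have hN : 0 < (μ - ν) * Real.pi := by
    have : ν < μ := by linarith
    nlinarith [Real.pi_pos]
  unfold kapUC kappa
  rw [div_le_div_iff₀ hIpos hIlow]
  exact mul_le_mul_of_nonneg_left hI1 hN.le

lemma kapLC_pos (hμ1 : 1/2 < μ) (hμ2 : μ ≤ 2) (hν1 : 0 < ν) (hν2 : ν < 1/2) (hM : 0 < M) :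
    0 < kapLC μ ν M := by
  unfold kapLC
  have hIhigh := IhighC_pos hμ1 hμ2 hν1 hν2 hM
  have hN : 0 < (μ - ν) * Real.pi := by
    have : ν < μ := by linarith
    nlinarith [Real.pi_pos]
  positivity

lemma kapUC_pos (hμ1 : 1/2 < μ) (hν1 : 0 < ν) (hν2 : ν < 1/2) (hM : 0 < M) :
    0 < kapUC μ ν M := by
  unfold kapUC
  have hIlow := IlowC_pos hμ1 hν1 hM (ν := ν)
  have hN : 0 < (μ - ν) * Real.pi := by
    have : ν < μ := by linarith
    nlinarith [Real.pi_pos]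
  positivity

lemma kapLC_le_kapUC (hμ1 : 1/2 < μ) (hμ2 : μ ≤ 2) (hν1 : 0 < ν) (hν2 : ν < 1/2) (hM : 0 < M) :
    kapLC μ ν M ≤ kapUC μ ν M := by
  unfold kapLC kapUC
  have hIlow := IlowC_pos hμ1 hν1 hM (ν := ν)
  have hIhigh := IhighC_pos hμ1 hμ2 hν1 hν2 hM
  have hle := IlowC_le_IhighC hμ1 hμ2 hν1 hν2 hM
  have hN : 0 ≤ (μ - ν) * Real.pi := by
    have : ν < μ := by linarith
    nlinarith [Real.pi_pos]
  exact div_le_div₀ hN le_rfl hIlow hle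

end PartD

section PartE
variable {μ ν M : ℝ} {g : ℝ → ℝ}

lemma S_lb1 (hν1 : 0 < ν) (hν2 : ν < 1/2) (hνμ : ν < μ) (hgc : Continuous g)
    (hgb : ∀ x, |g x| ≤ M) {x : ℝ} (hx : 0 < x) (hx1 : x ≤ 1) :
    Sl1C ν M * x ^ (3 * ν - 1) ≤ x * hInv μ ν g x * (hInvDeriv μ ν g x) ^ 2 := by
  have e : x * ((Real.exp M)⁻¹ / ν * x ^ ν) * ((Real.exp M)⁻¹ * x ^ (ν - 1)) ^ 2
      = Sl1C ν M * x ^ (3 * ν - 1) := by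
    rw [mul_pow, show x * ((Real.exp M)⁻¹ / ν * x ^ ν) * (((Real.exp M)⁻¹) ^ 2 * (x ^ (ν - 1)) ^ 2)
        = ((Real.exp M)⁻¹ / ν * ((Real.exp M)⁻¹) ^ 2) * (x * x ^ ν * (x ^ (ν - 1)) ^ 2) by ring,
      x_mul_rpow_sq hx, show 1 + ν + 2 * (ν - 1) = 3 * ν - 1 by ring]
    rfl
  rw [← e]
  have s1 : x * ((Real.exp M)⁻¹ / ν * x ^ ν) ≤ x * hInv μ ν g x :=
    mul_le_mul_of_nonneg_left (hInv_lb1 hν1 hν2 hνμ hgc hgb hx hx1) hx.le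
  have s2 : ((Real.exp M)⁻¹ * x ^ (ν - 1)) ^ 2 ≤ (hInvDeriv μ ν g x) ^ 2 := by
    apply pow_le_pow_left₀ ?_ (D_lb1 hν1 hνμ hgb hx hx1) 2
    have := Real.rpow_nonneg hx.le (ν - 1)
    positivity
  apply mul_le_mul s1 s2 (by positivity)
    (mul_nonneg hx.le (hInv_pos hν1 hν2 hνμ hgc hgb hx).le)

lemma S_ub1 (hν1 : 0 < ν) (hν2 : ν < 1/2) (hνμ : ν < μ) (hμ2 : μ ≤ 2) (hgc : Continuous g)
    (hgb : ∀ x, |g x| ≤ M) {x : ℝ} (hx : 0 < x) (hx1 : x ≤ 1) :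
    x * hInv μ ν g x * (hInvDeriv μ ν g x) ^ 2 ≤ Su1C ν M * x ^ (3 * ν - 1) := by
  have e : x * (2 * Real.exp M / ν * x ^ ν) * (2 * Real.exp M * x ^ (ν - 1)) ^ 2
      = Su1C ν M * x ^ (3 * ν - 1) := by
    rw [mul_pow, show x * (2 * Real.exp M / ν * x ^ ν) * ((2 * Real.exp M) ^ 2 * (x ^ (ν - 1)) ^ 2)
        = (2 * Real.exp M / ν * (2 * Real.exp M) ^ 2) * (x * x ^ ν * (x ^ (ν - 1)) ^ 2) by ring,
      x_mul_rpow_sq hx, show 1 + ν + 2 * (ν - 1) = 3 * ν - 1 by ring]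
    rfl
  rw [← e]
  have s1 : x * hInv μ ν g x ≤ x * (2 * Real.exp M / ν * x ^ ν) :=
    mul_le_mul_of_nonneg_left (hInv_ub1 hν1 hν2 hνμ hμ2 hgc hgb hx hx1) hx.le
  have s2 : (hInvDeriv μ ν g x) ^ 2 ≤ (2 * Real.exp M * x ^ (ν - 1)) ^ 2 :=
    pow_le_pow_left₀ (D_nonneg x) (D_ub1 hν1 hνμ hμ2 hgb hx hx1) 2
  apply mul_le_mul s1 s2 (by positivity)
    (by
      have h1 : (0:ℝ) ≤ 2 * Real.exp M / ν * x ^ ν := by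
        have := Real.rpow_nonneg hx.le ν
        positivity
      exact mul_nonneg hx.le h1)

lemma S_lb2 (hν1 : 0 < ν) (hν2 : ν < 1/2) (hνμ : ν < μ) (hgc : Continuous g)
    (hgb : ∀ x, |g x| ≤ M) {x : ℝ} (hx : 1 ≤ x) :
    Sl2C μ M * x ^ (3 * μ - 1) ≤ x * hInv μ ν g x * (hInvDeriv μ ν g x) ^ 2 := by
  have hx0 : (0:ℝ) < x := by linarith
  have e : x * ((Real.exp M)⁻¹ / μ * x ^ μ) * ((Real.exp M)⁻¹ * x ^ (μ - 1)) ^ 2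
      = Sl2C μ M * x ^ (3 * μ - 1) := by
    rw [mul_pow, show x * ((Real.exp M)⁻¹ / μ * x ^ μ) * (((Real.exp M)⁻¹) ^ 2 * (x ^ (μ - 1)) ^ 2)
        = ((Real.exp M)⁻¹ / μ * ((Real.exp M)⁻¹) ^ 2) * (x * x ^ μ * (x ^ (μ - 1)) ^ 2) by ring,
      x_mul_rpow_sq hx0, show 1 + μ + 2 * (μ - 1) = 3 * μ - 1 by ring]
    rfl
  rw [← e]
  have s1 : x * ((Real.exp M)⁻¹ / μ * x ^ μ) ≤ x * hInv μ ν g x :=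
    mul_le_mul_of_nonneg_left (hInv_lb2 hν1 hν2 hνμ hgc hgb hx) hx0.le
  have s2 : ((Real.exp M)⁻¹ * x ^ (μ - 1)) ^ 2 ≤ (hInvDeriv μ ν g x) ^ 2 := by
    apply pow_le_pow_left₀ ?_ (D_lb2 hν1 hνμ hgb hx) 2
    have := Real.rpow_nonneg hx0.le (μ - 1)
    positivity
  apply mul_le_mul s1 s2 (by positivity)
    (mul_nonneg hx0.le (hInv_pos hν1 hν2 hνμ hgc hgb hx0).le)

lemma S_ub2 (hν1 : 0 < ν) (hν2 : ν < 1/2) (hνμ : ν < μ) (hμ2 : μ ≤ 2) (hgc : Continuous g)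
    (hgb : ∀ x, |g x| ≤ M) {x : ℝ} (hx : 1 ≤ x) :
    x * hInv μ ν g x * (hInvDeriv μ ν g x) ^ 2 ≤ Su2C μ ν M * x ^ (3 * μ - 1) := by
  have hx0 : (0:ℝ) < x := by linarith
  have e : x * (2 * Real.exp M * (1/ν + 1/μ) * x ^ μ) * (2 * Real.exp M * x ^ (μ - 1)) ^ 2
      = Su2C μ ν M * x ^ (3 * μ - 1) := by
    rw [mul_pow, show x * (2 * Real.exp M * (1/ν + 1/μ) * x ^ μ)
          * ((2 * Real.exp M) ^ 2 * (x ^ (μ - 1)) ^ 2)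
        = (2 * Real.exp M * (1/ν + 1/μ) * (2 * Real.exp M) ^ 2)
          * (x * x ^ μ * (x ^ (μ - 1)) ^ 2) by ring,
      x_mul_rpow_sq hx0, show 1 + μ + 2 * (μ - 1) = 3 * μ - 1 by ring]
    rfl
  rw [← e]
  have s1 : x * hInv μ ν g x ≤ x * (2 * Real.exp M * (1/ν + 1/μ) * x ^ μ) :=
    mul_le_mul_of_nonneg_left (hInv_ub2 hν1 hν2 hνμ hμ2 hgc hgb hx) hx0.le
  have s2 : (hInvDeriv μ ν g x) ^ 2 ≤ (2 * Real.exp M * x ^ (μ - 1)) ^ 2 :=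
    pow_le_pow_left₀ (D_nonneg x) (D_ub2 hν1 hνμ hμ2 hgb hx) 2
  apply mul_le_mul s1 s2 (by positivity)
    (by
      have h1 : (0:ℝ) ≤ 2 * Real.exp M * (1/ν + 1/μ) * x ^ μ := by
        have h2 := Real.rpow_nonneg hx0.le μ
        have h3 : 0 < 1/ν + 1/μ := by
          have : 0 < μ := by linarith
          positivity
        positivity
      exact mul_nonneg hx0.le h1)

lemma S_pos (hν1 : 0 < ν) (hν2 : ν < 1/2) (hνμ : ν < μ) (hgc : Continuous g)
    (hgb : ∀ x, |g x| ≤ M) {x : ℝ} (hx : 0 < x) :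
    0 < x * hInv μ ν g x * (hInvDeriv μ ν g x) ^ 2 := by
  have h1 := hInv_pos hν1 hν2 hνμ hgc hgb hx
  have h2 : 0 < hInvDeriv μ ν g x := by
    unfold hInvDeriv
    have : (0:ℝ) < |x| ^ (ν - 1) := Real.rpow_pos_of_pos (abs_pos.mpr hx.ne') _
    have : (0:ℝ) < (x ^ 2 + 1) ^ ((μ - ν) / 2) := Real.rpow_pos_of_pos (by positivity) _
    positivity
  positivity

lemma kappa_nonneg (hμ1 : 1/2 < μ) (hμ2 : μ ≤ 2) (hν1 : 0 < ν) (hν2 : ν < 1/2) (hM : 0 < M)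
    (hgc : Continuous g) (hGe : ∀ x, Gfun μ ν g (-x) = Gfun μ ν g x)
    (hgb : ∀ x, |g x| ≤ M) : 0 ≤ kappa μ ν g :=
  le_trans (kapLC_pos hμ1 hμ2 hν1 hν2 hM).le (kappa_lb hμ1 hμ2 hν1 hν2 hM hgc hGe hgb)

lemma B_small (hμ1 : 1/2 < μ) (hμ2 : μ ≤ 2) (hν1 : 0 < ν) (hν2 : ν < 1/2) (hM : 0 < M)
    (hgc : Continuous g) (hGe : ∀ x, Gfun μ ν g (-x) = Gfun μ ν g x)
    (hgb : ∀ x, |g x| ≤ M) {x : ℝ} (hx : 0 < x) (hx1 : x ≤ 1) :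
    kapLC μ ν M / Su1C ν M * x ^ (1 - 3 * ν) ≤ Bfun μ ν g x ∧
    Bfun μ ν g x ≤ kapUC μ ν M / Sl1C ν M * x ^ (1 - 3 * ν) := by
  have hνμ : ν < μ := by linarith
  have hSpos := S_pos hν1 hν2 hνμ hgc hgb hx (μ := μ)
  have hK := Real.exp_pos M
  constructor
  · have h := div_le_div₀ (kappa_nonneg hμ1 hμ2 hν1 hν2 hM hgc hGe hgb)
      (kappa_lb hμ1 hμ2 hν1 hν2 hM hgc hGe hgb) hSpos (S_ub1 hν1 hν2 hνμ hμ2 hgc hgb hx hx1)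
    rw [div_c_rpow hx, show -(3 * ν - 1) = 1 - 3 * ν by ring] at h
    exact h
  · have hrp := Real.rpow_pos_of_pos hx (3 * ν - 1)
    have hSl : 0 < Sl1C ν M := by unfold Sl1C; positivity
    have h := div_le_div₀ (kapUC_pos hμ1 hν1 hν2 hM).le
      (kappa_ub hμ1 hμ2 hν1 hν2 hM hgc hGe hgb) (by positivity)
      (S_lb1 hν1 hν2 hνμ hgc hgb hx hx1)
    rw [div_c_rpow hx, show -(3 * ν - 1) = 1 - 3 * ν by ring] at h
    exact h

lemma B_large (hμ1 : 1/2 < μ) (hμ2 : μ ≤ 2) (hν1 : 0 < ν) (hν2 : ν < 1/2) (hM : 0 < M)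
    (hgc : Continuous g) (hGe : ∀ x, Gfun μ ν g (-x) = Gfun μ ν g x)
    (hgb : ∀ x, |g x| ≤ M) {x : ℝ} (hx : 1 ≤ x) :
    kapLC μ ν M / Su2C μ ν M * x ^ (1 - 3 * μ) ≤ Bfun μ ν g x ∧
    Bfun μ ν g x ≤ kapUC μ ν M / Sl2C μ M * x ^ (1 - 3 * μ) := by
  have hνμ : ν < μ := by linarith
  have hμ0 : (0:ℝ) < μ := by linarith
  have hx0 : (0:ℝ) < x := by linarith
  have hSpos := S_pos hν1 hν2 hνμ hgc hgb hx0 (μ := μ)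
  have hK := Real.exp_pos M
  constructor
  · have h := div_le_div₀ (kappa_nonneg hμ1 hμ2 hν1 hν2 hM hgc hGe hgb)
      (kappa_lb hμ1 hμ2 hν1 hν2 hM hgc hGe hgb) hSpos (S_ub2 hν1 hν2 hνμ hμ2 hgc hgb hx)
    rw [div_c_rpow hx0, show -(3 * μ - 1) = 1 - 3 * μ by ring] at h
    exact h
  · have hrp := Real.rpow_pos_of_pos hx0 (3 * μ - 1)
    have hSl : 0 < Sl2C μ M := by unfold Sl2C; positivity
    have h := div_le_div₀ (kapUC_pos hμ1 hν1 hν2 hM).le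
      (kappa_ub hμ1 hμ2 hν1 hν2 hM hgc hGe hgb) (by positivity)
      (S_lb2 hν1 hν2 hνμ hgc hgb hx)
    rw [div_c_rpow hx0, show -(3 * μ - 1) = 1 - 3 * μ by ring] at h
    exact h

lemma B_even (hν1 : 0 < ν) (hgc : Continuous g)
    (hGe : ∀ x, Gfun μ ν g (-x) = Gfun μ ν g x) (x : ℝ) :
    Bfun μ ν g (-x) = Bfun μ ν g x := by
  unfold Bfun
  rw [hInv_odd hν1 hgc hGe, D_even hGe]
  congr 1
  ring

end PartE

/-- Two-sided power-law bounds for `B = b' ∘ h⁻¹` (used in Section 4): for `g ∈ X₁` with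
`‖g‖_∞ ≤ M`, `B(x) ≍ |x|^(1−3ν)` for `0 < |x| ≤ 1` and `B(x) ≍ |x|^(1−3μ)` for `|x| ≥ 1`. -/
theorem statement18 (μ ν : ℝ) (hμ1 : 1 / 2 < μ) (hμ2 : μ ≤ 2) (hν1 : 0 < ν) (hν2 : ν < 1 / 2)
    (M : ℝ) (hM : 0 < M) :
    ∃ c₁ c₂ : ℝ, 0 < c₁ ∧ c₁ ≤ c₂ ∧
      ∀ g : ℝ → ℝ, Continuous g →
        Filter.Tendsto g Filter.atTop (nhds 0) → Filter.Tendsto g Filter.atBot (nhds 0) →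
        (∀ x : ℝ, Gfun μ ν g (-x) = Gfun μ ν g x) →
        (∀ x y : ℝ, 0 < y → y ≤ x →
          0 ≤ Gfun μ ν g x - Gfun μ ν g y ∧
          Gfun μ ν g x - Gfun μ ν g y ≤ (μ - ν) * (Real.log (x / y) + 2)) →
        (∀ x : ℝ, |g x| ≤ M) →
        (∀ x : ℝ, 0 < |x| → |x| ≤ 1 →
          c₁ * |x| ^ (1 - 3 * ν) ≤ Bfun μ ν g x ∧ Bfun μ ν g x ≤ c₂ * |x| ^ (1 - 3 * ν)) ∧
        (∀ x : ℝ, 1 ≤ |x| →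
          c₁ * |x| ^ (1 - 3 * μ) ≤ Bfun μ ν g x ∧ Bfun μ ν g x ≤ c₂ * |x| ^ (1 - 3 * μ)) := by
  have hνμ : ν < μ := by linarith
  have hμ0 : (0:ℝ) < μ := by linarith
  have hK : (0:ℝ) < Real.exp M := Real.exp_pos M
  have hKL := kapLC_pos hμ1 hμ2 hν1 hν2 hM
  have hKU := kapUC_pos hμ1 hν1 hν2 hM
  have hSu1 : 0 < Su1C ν M := by unfold Su1C; positivity
  have hSu2 : 0 < Su2C μ ν M := by
    unfold Su2C
    have : (0:ℝ) < 1/ν + 1/μ := by positivity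
    positivity
  have hSl1 : 0 < Sl1C ν M := by unfold Sl1C; positivity
  have hSl2 : 0 < Sl2C μ M := by unfold Sl2C; positivity
  have hS1 : Sl1C ν M ≤ Su1C ν M := by
    unfold Sl1C Su1C
    have h1 : (Real.exp M)⁻¹ ≤ 2 * Real.exp M := by
      have := Real.one_le_exp hM.le
      have h2 : (Real.exp M)⁻¹ ≤ 1 := by
        rw [inv_le_one_iff₀]; right; exact this
      linarith
    gcongr
  refine ⟨min (kapLC μ ν M / Su1C ν M) (kapLC μ ν M / Su2C μ ν M),
      max (kapUC μ ν M / Sl1C ν M) (kapUC μ ν M / Sl2C μ M), ?_, ?_, ?_⟩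
  · exact lt_min (div_pos hKL hSu1) (div_pos hKL hSu2)
  · calc min (kapLC μ ν M / Su1C ν M) (kapLC μ ν M / Su2C μ ν M)
        ≤ kapLC μ ν M / Su1C ν M := min_le_left _ _
      _ ≤ kapUC μ ν M / Sl1C ν M :=
          div_le_div₀ hKU.le (kapLC_le_kapUC hμ1 hμ2 hν1 hν2 hM) hSl1 hS1
      _ ≤ max (kapUC μ ν M / Sl1C ν M) (kapUC μ ν M / Sl2C μ M) := le_max_left _ _
  · intro g hgc _ _ hGe _ hgb
    have heq : ∀ x : ℝ, Bfun μ ν g x = Bfun μ ν g |x| := by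
      intro x
      rcases le_or_gt 0 x with h | h
      · rw [abs_of_nonneg h]
      · rw [abs_of_neg h]
        exact (B_even hν1 hgc hGe x).symm
    constructor
    · intro x h0 h1
      rw [heq x]
      obtain ⟨hl, hu⟩ := B_small hμ1 hμ2 hν1 hν2 hM hgc hGe hgb h0 h1
      have hnn : (0:ℝ) ≤ |x| ^ (1 - 3 * ν) := Real.rpow_nonneg (abs_nonneg x) _
      exact ⟨le_trans (mul_le_mul_of_nonneg_right (min_le_left _ _) hnn) hl,
        le_trans hu (mul_le_mul_of_nonneg_right (le_max_left _ _) hnn)⟩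
    · intro x h1
      rw [heq x]
      obtain ⟨hl, hu⟩ := B_large hμ1 hμ2 hν1 hν2 hM hgc hGe hgb h1
      have hnn : (0:ℝ) ≤ |x| ^ (1 - 3 * μ) := Real.rpow_nonneg (abs_nonneg x) _
      exact ⟨le_trans (mul_le_mul_of_nonneg_right (min_le_right _ _) hnn) hl,
        le_trans hu (mul_le_mul_of_nonneg_right (le_max_right _ _) hnn)⟩
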